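/- If for some non-empty subset V ⊆ [1;n] there is no column v ∈ [1; n+r] with |V ∩ NZR(v)| = 1, then there exists a matrix M ∈ ℝ^{n×(n+r)} with the non-zero structure of X = (𝒜,ℬ) whose rows indexed by V are linearly dependent; in particular M does not have full row rank. -/

import Mathlib

open Matrix Finset

/-- If some non-empty `V ⊆ [1;n]` admits no column `v` with
`|V ∩ NZR(v)| = 1`, then there is a real matrix `M` with the non-zero
structure of `X = (𝒜,ℬ)` whose rows indexed by `V` are linearly dependent;
in particular `M` does not have full row rank. -/
theorem dependent_realization_of_G0_failure (n r : ℕ)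
    (X : Matrix (Fin n) (Fin (n + r)) Bool)
    (V : Finset (Fin n)) (hV : V.Nonempty)
    (hfail : ∀ v : Fin (n + r), (V.filter (fun i => X i v = true)).card ≠ 1) :
    ∃ M : Matrix (Fin n) (Fin (n + r)) ℝ,
      (∀ i j, M i j ≠ 0 ↔ X i j = true) ∧
      ¬ LinearIndependent ℝ (fun i : {i // i ∈ V} => M i.1) ∧
      M.rank ≠ n := by
  classical
  set S : Fin (n + r) → Finset (Fin n) :=
    fun j => V.filter (fun i => X i j = true) with hS
  have hcard : ∀ j, (S j).Nonempty → 2 ≤ (S j).card := by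
    intro j hj
    have h1 : 1 ≤ (S j).card := Finset.card_pos.mpr hj
    have h2 := hfail j
    simp only [hS] at *
    omega
  set M : Matrix (Fin n) (Fin (n + r)) ℝ :=
    fun i j => if X i j = true then
      (if i ∈ V ∧ ∀ k ∈ S j, i ≤ k then 1 - ((S j).card : ℝ) else 1)
      else 0 with hM
  have hstruct : ∀ i j, M i j ≠ 0 ↔ X i j = true := by
    intro i j
    by_cases hx : X i j = true
    · simp only [hM, hx, if_true, iff_true]
      by_cases hc : i ∈ V ∧ ∀ k ∈ S j, i ≤ k
      · rw [if_pos hc]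
        have hi : i ∈ S j := Finset.mem_filter.mpr ⟨hc.1, hx⟩
        have h2 : 2 ≤ (S j).card := hcard j ⟨i, hi⟩
        have : (2 : ℝ) ≤ ((S j).card : ℝ) := by exact_mod_cast h2
        intro h; linarith
      · simp [hc]
    · simp [hM, hx]
  -- the rows in V sum to zero in every column
  have hsum : ∀ j, ∑ i ∈ V, M i j = 0 := by
    intro j
    have hsplit : ∑ i ∈ V, M i j = ∑ i ∈ S j, M i j := by
      rw [hS]
      exact (Finset.sum_filter_of_ne (fun i _ hne => (hstruct i j).mp hne)).symm
    rw [hsplit]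
    rcases (S j).eq_empty_or_nonempty with he | hne
    · simp [he]
    · set i0 := (S j).min' hne with hi0
      have hi0mem : i0 ∈ S j := (S j).min'_mem hne
      have hi0V : i0 ∈ V := (Finset.mem_filter.mp hi0mem).1
      have hi0X : X i0 j = true := (Finset.mem_filter.mp hi0mem).2
      have hval0 : M i0 j = 1 - ((S j).card : ℝ) := by
        simp only [hM, hi0X, if_true]
        rw [if_pos ⟨hi0V, fun k hk => (S j).min'_le k hk⟩]
      have hvalother : ∀ i ∈ S j, i ≠ i0 → M i j = 1 := by
        intro i hi hne'
        have hiX : X i j = true := (Finset.mem_filter.mp hi).2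
        simp only [hM, hiX, if_true]
        rw [if_neg]
        rintro ⟨-, hle⟩
        exact hne' (le_antisymm (hle i0 hi0mem) ((S j).min'_le i hi))
      rw [← Finset.add_sum_erase _ _ hi0mem, hval0,
        Finset.sum_congr rfl (fun i hi => hvalother i (Finset.mem_of_mem_erase hi)
          (Finset.ne_of_mem_erase hi))]
      rw [Finset.sum_const, Finset.card_erase_of_mem hi0mem]
      have h2 : 2 ≤ (S j).card := hcard j hne
      have : ((S j).card - 1 : ℕ) = ((S j).card : ℝ) - 1 := by
        push_cast [Nat.cast_sub (by omega : 1 ≤ (S j).card)]; ring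
      rw [nsmul_eq_mul, this]; ring
  have hdep : ¬ LinearIndependent ℝ (fun i : {i // i ∈ V} => M i.1) := by
    intro h
    have := (Fintype.linearIndependent_iff.mp h) (fun _ => (1 : ℝ))
    have h10 : (1 : ℝ) = 0 := by
      apply this _ ⟨hV.choose, hV.choose_spec⟩
      funext j
      have hcoe : ∑ i : {i // i ∈ V}, M i.1 j = ∑ i ∈ V, M i j :=
        Finset.sum_coe_sort V (fun i => M i j)
      simp only [one_smul, Finset.sum_apply, Pi.zero_apply]
      rw [hcoe]; exact hsum j
    exact one_ne_zero h10
  refine ⟨M, hstruct, hdep, ?_⟩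
  intro hrank
  apply hdep
  have hli : LinearIndependent ℝ M := by
    rw [linearIndependent_iff_card_eq_finrank_span]
    rw [Set.finrank, Fintype.card_fin]
    exact hrank.symm.trans (Matrix.rank_eq_finrank_span_row M)
  exact hli.comp Subtype.val Subtype.val_injective
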